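/- arXiv:2106.14751 — 2 statements merged into one kernel-verified Lean document; each statement's English description precedes it below -/
import Mathlib

section
/- For every integer n ≥ 1 and every x, x^n = ((-1)^(n-1)/(n-1)!) · Σ_{k=1}^{n} bel_k(x) · S₂(n,k), as an identity of polynomials in x over ℚ. -/
open PowerSeries Finset

noncomputable section

/-- Composition of formal power series (the standard composition when the inner
series `f` has zero constant term, since then `coeff n (f ^ k) = 0` for `k > n`). -/
def pcomp {R : Type*} [CommRing R] (g f : PowerSeries R) : PowerSeries R :=
  PowerSeries.mk fun n =>
    ∑ k ∈ Finset.range (n + 1), PowerSeries.coeff k g * PowerSeries.coeff n (f ^ k)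

/-- The formal power series `log(1+t)` over `ℚ`. -/
def Lq : PowerSeries ℚ := PowerSeries.mk fun n => if n = 0 then 0 else (-1) ^ (n + 1) / n

/-- The formal power series `-log(1-t)` over `ℚ`. -/
def Labs : PowerSeries ℚ := PowerSeries.mk fun n => if n = 0 then 0 else 1 / n

/-- Signed Stirling numbers of the first kind: `(log(1+t))^k / k! = Σ S₁(n,k) tⁿ/n!`. -/
def S1 (n k : ℕ) : ℚ := n.factorial / k.factorial * PowerSeries.coeff n (Lq ^ k)

/-- Unsigned Stirling numbers of the first kind: `(-log(1-t))^k / k! = Σ |s(n,k)| tⁿ/n!`. -/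
def uS1 (n k : ℕ) : ℚ := n.factorial / k.factorial * PowerSeries.coeff n (Labs ^ k)

/-- Stirling numbers of the second kind: `(eᵗ-1)^k / k! = Σ S₂(n,k) tⁿ/n!`. -/
def S2 (n k : ℕ) : ℚ :=
  n.factorial / k.factorial * PowerSeries.coeff n ((PowerSeries.exp ℚ - 1) ^ k)

/-- `λ^(n-1) * (1)_{n,1/λ} = ∏_{j=1}^{n-1} (λ - j)`. -/
def dc (l : ℚ) (n : ℕ) : ℚ := ∏ j ∈ Finset.Ico 1 n, (l - j)

/-- Degenerate falling factorial `(1)_{n,λ} = ∏_{j=0}^{n-1} (1 - jλ)`. -/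
def ffac (l : ℚ) (n : ℕ) : ℚ := ∏ j ∈ Finset.range n, (1 - j * l)

/-- Degenerate logarithm `log_λ(1+t) = Σ_{n≥1} λ^{n-1}(1)_{n,1/λ} tⁿ/n!`. -/
def Ld (l : ℚ) : PowerSeries ℚ :=
  PowerSeries.mk fun n => if n = 0 then 0 else dc l n / n.factorial

/-- Degenerate exponential `e_λ(t) = Σ_{n≥0} (1)_{n,λ} tⁿ/n!`. -/
def Ed (l : ℚ) : PowerSeries ℚ := PowerSeries.mk fun n => ffac l n / n.factorial

/-- Degenerate Stirling numbers of the first kind. -/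
def S1d (l : ℚ) (n k : ℕ) : ℚ :=
  n.factorial / k.factorial * PowerSeries.coeff n (Ld l ^ k)

/-- Degenerate Stirling numbers of the second kind. -/
def S2d (l : ℚ) (n k : ℕ) : ℚ :=
  n.factorial / k.factorial * PowerSeries.coeff n ((Ed l - 1) ^ k)

/-- Bell numbers of the second kind: `log(1 + log(1+t)) = Σ_{n≥1} bel_n tⁿ/n!`. -/
def belNum (n : ℕ) : ℚ := n.factorial * PowerSeries.coeff n (pcomp Lq Lq)

/-- Bell numbers of the second kind via the explicit formula. -/
def belN (m : ℕ) : ℚ :=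
  ∑ k ∈ Finset.Icc 1 m, (-1) ^ (k - 1) * (k - 1).factorial * S1 m k

/-- Bell polynomials of the second kind. -/
def belPoly (n : ℕ) : Polynomial ℚ :=
  ∑ k ∈ Finset.Icc 1 n,
    Polynomial.C ((-1) ^ (k - 1) * (k - 1).factorial * S1 n k) * Polynomial.X ^ k

/-- Bell polynomials of the second kind evaluated at `x : ℚ`. -/
def belVal (x : ℚ) (m : ℕ) : ℚ :=
  ∑ k ∈ Finset.Icc 1 m, (-1) ^ (k - 1) * (k - 1).factorial * S1 m k * x ^ k

/-- Degenerate Bell numbers of the second kind via generating function. -/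
def belNumD (l : ℚ) (n : ℕ) : ℚ := n.factorial * PowerSeries.coeff n (pcomp (Ld l) (Ld l))

/-- Degenerate Bell numbers of the second kind via the explicit formula. -/
def belND (l : ℚ) (m : ℕ) : ℚ := ∑ j ∈ Finset.Icc 1 m, dc l j * S1d l m j

/-- Degenerate Bell polynomials of the second kind. -/
def belPolyD (l : ℚ) (n : ℕ) : Polynomial ℚ :=
  ∑ k ∈ Finset.Icc 1 n, Polynomial.C (dc l k * S1d l n k) * Polynomial.X ^ k

/-- `log(1+t)` as a power series over `ℚ[x]`. -/
def LqP : PowerSeries (Polynomial ℚ) :=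
  PowerSeries.mk fun n => if n = 0 then 0 else Polynomial.C ((-1) ^ (n + 1) / n : ℚ)

/-- `-log(1-t)` as a power series over `ℚ[x]`. -/
def LabsP : PowerSeries (Polynomial ℚ) :=
  PowerSeries.mk fun n => if n = 0 then 0 else Polynomial.C (1 / n : ℚ)

/-- `log(1-t)` as a power series over `ℚ[x]`. -/
def MP : PowerSeries (Polynomial ℚ) :=
  PowerSeries.mk fun n => if n = 0 then 0 else Polynomial.C (-(1 / n) : ℚ)

/-- `log_λ(1+t)` as a power series over `ℚ[x]`. -/
def LdP (l : ℚ) : PowerSeries (Polynomial ℚ) :=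
  PowerSeries.mk fun n => if n = 0 then 0 else Polynomial.C (dc l n / n.factorial)

/-- The polylogarithm `Li_k(y) = Σ_{m≥1} yᵐ/mᵏ` as a power series over `ℚ[x]`. -/
def LiP (k : ℤ) : PowerSeries (Polynomial ℚ) :=
  PowerSeries.mk fun m => if m = 0 then 0 else Polynomial.C (((m : ℚ) ^ k)⁻¹)

/-- The degenerate polylogarithm `Li_{k,λ}` as a power series over `ℚ[x]`. -/
def LidP (l : ℚ) (k : ℤ) : PowerSeries (Polynomial ℚ) :=
  PowerSeries.mk fun m => if m = 0 then 0 else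
    Polynomial.C ((-1) ^ (m - 1) * dc l m / ((m - 1).factorial * (m : ℚ) ^ k))

/-- `-x · log(1-t)` over `ℚ[x]`. -/
def innerP : PowerSeries (Polynomial ℚ) := PowerSeries.C (Polynomial.X : Polynomial ℚ) * LabsP

/-- `-x · log_λ(1-t)` over `ℚ[x]`. -/
def innerD (l : ℚ) : PowerSeries (Polynomial ℚ) :=
  PowerSeries.C (Polynomial.X : Polynomial ℚ) *
    PowerSeries.mk fun n => if n = 0 then 0 else
      Polynomial.C ((-1) ^ (n + 1) * dc l n / n.factorial)

/-- Poly-Bell polynomials of the second kind via generating function. -/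
def polyBellP (k : ℤ) (n : ℕ) : Polynomial ℚ :=
  (n.factorial : ℚ) • PowerSeries.coeff n (pcomp (LiP k) innerP)

/-- Poly-Bell polynomials of the second kind via the explicit formula. -/
def belPk (k : ℤ) (n : ℕ) : Polynomial ℚ :=
  ∑ l ∈ Finset.Icc 1 n,
    Polynomial.C ((((l : ℚ) ^ (k - 1))⁻¹) * (l - 1).factorial * uS1 n l) * Polynomial.X ^ l

/-- Degenerate poly-Bell polynomials of the second kind via generating function. -/
def belDPk (l : ℚ) (k : ℤ) (n : ℕ) : Polynomial ℚ :=
  (n.factorial : ℚ) • PowerSeries.coeff n (pcomp (LidP l k) (innerD l))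

/-- Degenerate poly-Bell polynomials of the second kind via the explicit formula. -/
def belE (l : ℚ) (k : ℤ) (m : ℕ) : Polynomial ℚ :=
  (-1 : Polynomial ℚ) ^ (m - 1) *
    ∑ j ∈ Finset.Icc 1 m,
      Polynomial.C ((((j : ℚ) ^ (k - 1))⁻¹) * dc l j * S1d l m j) * Polynomial.X ^ j


section Aux
variable {R : Type*} [CommRing R]

lemma coeff_pcomp (g f : PowerSeries R) (n : ℕ) :
    coeff n (pcomp g f) =
      ∑ k ∈ Finset.range (n + 1), coeff k g * coeff n (f ^ k) := by
  simp [pcomp]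

lemma coeff_pow_eq_zero {f : PowerSeries R} (hf : constantCoeff f = 0)
    {n k : ℕ} (h : n < k) : coeff n (f ^ k) = 0 := by
  have hX : (X : PowerSeries R) ∣ f := X_dvd_iff.mpr hf
  have : (X : PowerSeries R) ^ k ∣ f ^ k := pow_dvd_pow_of_dvd hX k
  exact (X_pow_dvd_iff.mp this) n h

lemma pcomp_one (f : PowerSeries R) : pcomp 1 f = 1 := by
  ext n
  rw [coeff_pcomp]
  rw [Finset.sum_eq_single 0]
  · simp
  · intro k _ hk
    simp [coeff_one, hk]
  · simp

lemma pcomp_add (g₁ g₂ f : PowerSeries R) :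
    pcomp (g₁ + g₂) f = pcomp g₁ f + pcomp g₂ f := by
  ext n
  simp [coeff_pcomp, add_mul, Finset.sum_add_distrib]

lemma pcomp_X {f : PowerSeries R} (hf : constantCoeff f = 0) : pcomp X f = f := by
  ext n
  rw [coeff_pcomp]
  rw [Finset.sum_eq_single 1]
  · simp
  · intro k _ hk
    simp [coeff_X, hk]
  · intro h
    simp only [Finset.mem_range, not_lt] at h
    have hn : n = 0 := by omega
    subst hn
    simp [coeff_zero_eq_constantCoeff, hf]

/-- helper: coefficient of `pcomp h f * w`. -/
lemma coeff_pcomp_mul {f : PowerSeries R} (hf : constantCoeff f = 0)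
    (h w : PowerSeries R) (n : ℕ) :
    coeff n (pcomp h f * w) =
      ∑ k ∈ Finset.range (n + 1), coeff k h * coeff n (f ^ k * w) := by
  rw [coeff_mul]
  have step : ∀ q ∈ antidiagonal n,
      coeff q.1 (pcomp h f) * coeff q.2 w =
      ∑ k ∈ Finset.range (n + 1), coeff k h * (coeff q.1 (f ^ k) * coeff q.2 w) := by
    intro q hq
    have hq1 : q.1 ≤ n := by
      have := Finset.HasAntidiagonal.mem_antidiagonal.mp hq
      omega
    rw [coeff_pcomp, Finset.sum_mul,
      Finset.sum_subset (Finset.range_subset_range.mpr (show q.1 + 1 ≤ n + 1 by omega))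
        (fun k _ hk => by
          simp only [Finset.mem_range, not_lt] at hk
          simp [coeff_pow_eq_zero hf (show q.1 < k by omega)])]
    exact Finset.sum_congr rfl fun k _ => by ring
  rw [Finset.sum_congr rfl step, Finset.sum_comm]
  refine Finset.sum_congr rfl fun k _ => ?_
  rw [← Finset.mul_sum, coeff_mul]

lemma pcomp_mul {f : PowerSeries R} (hf : constantCoeff f = 0)
    (g₁ g₂ : PowerSeries R) :
    pcomp (g₁ * g₂) f = pcomp g₁ f * pcomp g₂ f := by
  ext n
  rw [coeff_pcomp_mul hf]
  -- RHS: ∑ k, coeff k g₁ * coeff n (f^k * pcomp g₂ f)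
  have rhs : ∀ k, coeff n (f ^ k * pcomp g₂ f) =
      ∑ j ∈ Finset.range (n + 1), coeff j g₂ * coeff n (f ^ (k + j)) := by
    intro k
    rw [mul_comm, coeff_pcomp_mul hf]
    exact Finset.sum_congr rfl fun j _ => by rw [pow_add, mul_comm (f^k)]
  simp only [rhs, Finset.mul_sum]
  -- now RHS = ∑_{k ∈ range (n+1)} ∑_{j ∈ range (n+1)} c_k g₁ * (c_j g₂ * c_n f^(k+j))
  -- LHS = ∑_{k ∈ range (n+1)} coeff k (g₁ * g₂) * coeff n (f ^ k)
  rw [coeff_pcomp]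
  -- expand coeff k (g₁ * g₂)
  have lhs : ∀ k ∈ Finset.range (n+1), coeff k (g₁ * g₂) * coeff n (f ^ k) =
      ∑ p ∈ antidiagonal k, coeff p.1 g₁ * (coeff p.2 g₂ * coeff n (f ^ (p.1 + p.2))) := by
    intro k hk
    rw [coeff_mul, Finset.sum_mul]
    refine Finset.sum_congr rfl fun p hp => ?_
    rw [← Finset.HasAntidiagonal.mem_antidiagonal.mp hp]
    ring
  rw [Finset.sum_congr rfl lhs]
  -- turn LHS into a sum over the biUnion of antidiagonals
  rw [← Finset.sum_biUnion (by
    intro a _ b _ hab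
    apply Finset.disjoint_left.mpr
    intro p hpa hpb
    exact hab (by
      have h1 := Finset.HasAntidiagonal.mem_antidiagonal.mp hpa
      have h2 := Finset.HasAntidiagonal.mem_antidiagonal.mp hpb
      omega))]
  -- and RHS into a sum over the product square
  rw [← Finset.sum_product']
  apply Finset.sum_subset
  · intro p hp
    simp only [Finset.mem_biUnion, Finset.mem_range] at hp
    obtain ⟨k, hk, hpk⟩ := hp
    have := Finset.HasAntidiagonal.mem_antidiagonal.mp hpk
    simp only [Finset.mem_product, Finset.mem_range]
    omega
  · intro p hp hnp
    simp only [Finset.mem_product, Finset.mem_range] at hp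
    simp only [Finset.mem_biUnion, Finset.mem_range] at hnp
    have : n < p.1 + p.2 := by
      by_contra hle
      push_neg at hle
      exact hnp ⟨p.1 + p.2, by omega, Finset.HasAntidiagonal.mem_antidiagonal.mpr rfl⟩
    rw [coeff_pow_eq_zero hf this]
    ring

lemma pcomp_pow {f : PowerSeries R} (hf : constantCoeff f = 0) (g : PowerSeries R) (j : ℕ) :
    pcomp (g ^ j) f = (pcomp g f) ^ j := by
  induction j with
  | zero => simpa using pcomp_one f
  | succ j ih => rw [pow_succ, pow_succ, pcomp_mul hf, ih]

lemma derivative_pcomp {f : PowerSeries R} (hf : constantCoeff f = 0) (g : PowerSeries R) :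
    d⁄dX R (pcomp g f) = pcomp (d⁄dX R g) f * d⁄dX R f := by
  ext n
  rw [coeff_derivative, coeff_pcomp, coeff_pcomp_mul hf, Finset.sum_mul,
    Finset.sum_range_succ']
  have h0 : coeff 0 g * coeff (n + 1) (f ^ 0) * ((n : R) + 1) = 0 := by
    simp [coeff_one]
  rw [h0, add_zero]
  refine Finset.sum_congr rfl fun k _ => ?_
  have h1 : coeff (n + 1) (f ^ (k + 1)) * ((n : R) + 1) =
      coeff n (d⁄dX R (f ^ (k + 1))) := by
    rw [coeff_derivative]
  have h2 : d⁄dX R (f ^ (k + 1)) = (k + 1) • (f ^ k * d⁄dX R f) := by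
    rw [Derivation.leibniz_pow]
    simp [smul_eq_mul]
  rw [mul_assoc, h1, h2, map_nsmul, coeff_derivative]
  simp only [nsmul_eq_mul]
  push_cast
  ring

lemma constantCoeff_Lq : constantCoeff Lq = 0 := by
  rw [← coeff_zero_eq_constantCoeff]
  simp [Lq]

lemma constantCoeff_E : constantCoeff (exp ℚ - 1) = 0 := by
  simp [constantCoeff_exp]

lemma derivative_exp : d⁄dX ℚ (exp ℚ) = exp ℚ := by
  ext n
  rw [coeff_derivative, coeff_exp, coeff_exp]
  have h1 : ((n + 1).factorial : ℚ) ≠ 0 := Nat.cast_ne_zero.mpr (Nat.factorial_ne_zero _)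
  have h2 : ((n).factorial : ℚ) ≠ 0 := Nat.cast_ne_zero.mpr (Nat.factorial_ne_zero _)
  simp only [eq_ratCast, Rat.cast_div, Rat.cast_one, Rat.cast_natCast]
  rw [Nat.factorial_succ]
  push_cast
  field_simp

lemma derivative_E : d⁄dX ℚ (exp ℚ - 1) = exp ℚ := by
  rw [map_sub]
  simp [_root_.derivative_exp]

lemma coeff_dLq (n : ℕ) : coeff n (d⁄dX ℚ Lq) = (-1) ^ n := by
  rw [coeff_derivative]
  have h : ((n : ℚ) + 1) ≠ 0 := by positivity
  simp only [Lq, coeff_mk, Nat.succ_ne_zero, if_false]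
  push_cast
  rw [div_mul_cancel₀ _ h, pow_succ, pow_succ]
  ring

lemma one_add_X_mul_dLq : (1 + X) * d⁄dX ℚ Lq = 1 := by
  ext n
  cases n with
  | zero =>
    rw [coeff_zero_eq_constantCoeff, map_mul]
    simp [← coeff_zero_eq_constantCoeff, coeff_dLq]
  | succ n =>
    rw [add_mul, one_mul, map_add, coeff_succ_X_mul, coeff_dLq, coeff_dLq]
    simp [pow_succ]

lemma key_comp : pcomp Lq (exp ℚ - 1) = X := by
  have hE := constantCoeff_E
  apply PowerSeries.derivative.ext
  · rw [derivative_pcomp hE, derivative_E, derivative_X]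
    have h1 : pcomp ((1 + X) * d⁄dX ℚ Lq) (exp ℚ - 1) = 1 := by
      rw [one_add_X_mul_dLq, pcomp_one]
    rw [pcomp_mul hE, pcomp_add, pcomp_one, pcomp_X hE] at h1
    calc pcomp (d⁄dX ℚ Lq) (exp ℚ - 1) * exp ℚ
        = (1 + (exp ℚ - 1)) * pcomp (d⁄dX ℚ Lq) (exp ℚ - 1) := by ring
      _ = 1 := h1
  · rw [← coeff_zero_eq_constantCoeff, coeff_pcomp]
    simp [Lq]

lemma orth (n j : ℕ) (hj : 1 ≤ j) :
    ∑ k ∈ Finset.Icc 1 n, S2 n k * S1 k j = if j = n then 1 else 0 := by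
  have hE := constantCoeff_E
  have h1 : coeff n (pcomp (Lq ^ j) (exp ℚ - 1)) = if n = j then 1 else 0 := by
    rw [pcomp_pow hE, key_comp, coeff_X_pow]
  rw [coeff_pcomp] at h1
  have hset : Finset.range (n + 1) = insert 0 (Finset.Icc 1 n) := by
    ext x
    simp only [Finset.mem_range, Finset.mem_insert, Finset.mem_Icc]
    omega
  rw [hset, Finset.sum_insert (by simp)] at h1
  have h0 : coeff 0 (Lq ^ j) = 0 := coeff_pow_eq_zero constantCoeff_Lq hj
  rw [h0, zero_mul, zero_add] at h1
  have hfac : ∀ k : ℕ, (k.factorial : ℚ) ≠ 0 :=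
    fun k => Nat.cast_ne_zero.mpr (Nat.factorial_ne_zero _)
  have heq : ∑ k ∈ Finset.Icc 1 n, S2 n k * S1 k j =
      ((n.factorial : ℚ) / j.factorial) *
        ∑ k ∈ Finset.Icc 1 n, coeff k (Lq ^ j) * coeff n ((exp ℚ - 1) ^ k) := by
    rw [Finset.mul_sum]
    refine Finset.sum_congr rfl fun k _ => ?_
    unfold S2 S1
    field_simp
  rw [heq, h1]
  by_cases hjn : j = n
  · subst hjn
    simp [div_self (hfac j)]
  · have hnj : ¬(n = j) := fun h => hjn h.symm
    simp [hjn, hnj]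

end Aux

theorem stmt4 (n : ℕ) (hn : 1 ≤ n) :
    (Polynomial.X : Polynomial ℚ) ^ n =
      Polynomial.C ((-1 : ℚ) ^ (n - 1) / (n - 1).factorial) *
        ∑ k ∈ Finset.Icc 1 n, belPoly k * Polynomial.C (S2 n k) := by
  have hfac : ((n - 1).factorial : ℚ) ≠ 0 := Nat.cast_ne_zero.mpr (Nat.factorial_ne_zero _)
  symm
  have step1 : ∀ k ∈ Finset.Icc 1 n, belPoly k * Polynomial.C (S2 n k) =
      ∑ j ∈ Finset.Icc 1 n,
        Polynomial.C ((-1 : ℚ) ^ (j - 1) * (j - 1).factorial * (S1 k j * S2 n k)) *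
          Polynomial.X ^ j := by
    intro k hk
    have hkn : k ≤ n := (Finset.mem_Icc.mp hk).2
    unfold belPoly
    rw [Finset.sum_mul]
    rw [Finset.sum_subset (Finset.Icc_subset_Icc_right hkn)]
    · refine Finset.sum_congr rfl fun j hj => ?_
      rw [mul_right_comm, ← Polynomial.C_mul]
      ring_nf
    · intro j hjn hjk
      have hkj : k < j := by
        simp only [Finset.mem_Icc] at hjn hjk
        omega
      have hS1 : S1 k j = 0 := by
        unfold S1
        rw [coeff_pow_eq_zero constantCoeff_Lq hkj, mul_zero]
      simp [hS1]
  rw [Finset.sum_congr rfl step1, Finset.sum_comm]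
  have step2 : ∀ j ∈ Finset.Icc 1 n,
      (∑ k ∈ Finset.Icc 1 n,
        Polynomial.C ((-1 : ℚ) ^ (j - 1) * (j - 1).factorial * (S1 k j * S2 n k)) *
          Polynomial.X ^ j) =
      Polynomial.C ((-1 : ℚ) ^ (j - 1) * (j - 1).factorial * (if j = n then 1 else 0)) *
        Polynomial.X ^ j := by
    intro j hj
    have hsum : ∑ k ∈ Finset.Icc 1 n,
        (-1 : ℚ) ^ (j - 1) * (j - 1).factorial * (S1 k j * S2 n k) =
        (-1 : ℚ) ^ (j - 1) * (j - 1).factorial * (if j = n then 1 else 0) := by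
      rw [← Finset.mul_sum, ← orth n j (Finset.mem_Icc.mp hj).1]
      congr 1
      exact Finset.sum_congr rfl fun k _ => mul_comm _ _
    rw [← Finset.sum_mul]
    congr 1
    rw [← map_sum Polynomial.C _ (Finset.Icc 1 n), hsum]
  rw [Finset.sum_congr rfl step2]
  rw [Finset.sum_eq_single n]
  · have hif : (if n = n then (1 : ℚ) else 0) = 1 := if_pos rfl
    rw [hif, mul_one, ← mul_assoc, ← Polynomial.C_mul]
    have hone : (-1 : ℚ) ^ (n - 1) / (n - 1).factorial *
        ((-1 : ℚ) ^ (n - 1) * (n - 1).factorial) = 1 := by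
      have h2 : (-1 : ℚ) ^ (n - 1) * (-1 : ℚ) ^ (n - 1) = 1 := by
        rw [← mul_pow]
        norm_num
      field_simp
      linear_combination h2
    rw [hone, Polynomial.C_1, one_mul]
  · intro j hj hjn
    simp [hjn]
  · intro h
    exact absurd (Finset.mem_Icc.mpr ⟨hn, le_refl n⟩) h

end
end

section
/- For every integer n ≥ 1 and parameter λ, the degenerate Bell number of the second kind satisfies bel_{n,λ} = Σ_{k=1}^{n} λ^(k-1) (1)_{k,1/λ} S_{1,λ}(n,k). -/
open PowerSeries Finset

noncomputable section

theorem stmt8 (l : ℚ) (n : ℕ) (hn : 1 ≤ n) :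
    belNumD l n = ∑ k ∈ Finset.Icc 1 n, dc l k * S1d l n k := by
  unfold belNumD pcomp
  rw [coeff_mk, Finset.mul_sum]
  have h : ∑ k ∈ Finset.Icc 1 n,
        (n.factorial : ℚ) * (PowerSeries.coeff k (Ld l) * PowerSeries.coeff n (Ld l ^ k))
      = ∑ k ∈ Finset.range (n + 1),
        (n.factorial : ℚ) * (PowerSeries.coeff k (Ld l) * PowerSeries.coeff n (Ld l ^ k)) := by
    apply Finset.sum_subset
    · intro k hk
      have := Finset.mem_Icc.1 hk
      exact Finset.mem_range.2 (by omega)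
    · intro k hk hnk
      have h1 := Finset.mem_range.1 hk
      have h2 : ¬(1 ≤ k ∧ k ≤ n) := fun h => hnk (Finset.mem_Icc.2 h)
      have : k = 0 := by omega
      subst this
      simp [Ld]
  rw [← h]
  apply Finset.sum_congr rfl
  intro k hk
  have hk' := Finset.mem_Icc.1 hk
  simp only [Ld, S1d, coeff_mk, if_neg (by omega : k ≠ 0)]
  have h1 : (k.factorial : ℚ) ≠ 0 := Nat.cast_ne_zero.2 k.factorial_ne_zero
  field_simp

end
end
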